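/- arXiv:1602.04698 — 2 statements merged into one kernel-verified Lean document; each statement's English description precedes it below -/
import Mathlib

section
/- For every natural number n ≥ 3, the total graph of the cycle graph C_n on n vertices is isomorphic to the square of the cycle on 2n vertices, i.e. to the simple graph on ZMod (2n) in which distinct i and j are adjacent exactly when i − j ≡ ±1 or ±2 (mod 2n). Equivalently, T(C_n) has 2n vertices whose edge set is exactly the union of two vertex-disjoint n-cycles (on the odd-indexed and even-indexed vertices respectively) and a Hamiltonian cycle, edge-disjoint from both, that alternates between the two n-cycles. -/
/-- The total graph of a simple graph `G`: its vertices are `V ⊕ G.edgeSet`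
(vertex vertices and edge vertices); two distinct vertices are adjacent exactly when
the corresponding elements of `G` are adjacent vertices, edges sharing an endpoint,
or an incident vertex–edge pair. -/
def totalGraph {V : Type*} (G : SimpleGraph V) : SimpleGraph (V ⊕ G.edgeSet) where
  Adj x y :=
    match x, y with
    | Sum.inl u, Sum.inl w => G.Adj u w
    | Sum.inl u, Sum.inr e => u ∈ (e : Sym2 V)
    | Sum.inr e, Sum.inl u => u ∈ (e : Sym2 V)
    | Sum.inr e, Sum.inr f => e ≠ f ∧ ∃ u, u ∈ (e : Sym2 V) ∧ u ∈ (f : Sym2 V)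
  symm := ⟨by
    rintro (u | e) (w | f) h
    · exact h.symm
    · exact h
    · exact h
    · exact ⟨h.1.symm, h.2.imp fun u hu => ⟨hu.2, hu.1⟩⟩⟩
  loopless := ⟨by
    rintro (u | e) h
    · exact G.loopless.irrefl u h
    · exact h.1 rfl⟩

/-- The cycle graph `C n` on `ZMod n`: distinct `i, j` adjacent iff `i - j ≡ ±1 (mod n)`. -/
def cycleGraph (n : ℕ) : SimpleGraph (ZMod n) where
  Adj i j := i ≠ j ∧ (i - j = 1 ∨ j - i = 1)
  symm := ⟨fun i j h => ⟨h.1.symm, h.2.symm⟩⟩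
  loopless := ⟨fun i h => h.1 rfl⟩

/-- The square of the cycle on `ZMod n`: distinct `i, j` adjacent iff
`i - j ≡ ±1` or `±2 (mod n)`. -/
def cycleSquare (n : ℕ) : SimpleGraph (ZMod n) where
  Adj i j := i ≠ j ∧ (i - j = 1 ∨ j - i = 1 ∨ i - j = 2 ∨ j - i = 2)
  symm := ⟨fun i j h => ⟨h.1.symm, by tauto⟩⟩
  loopless := ⟨fun i h => h.1 rfl⟩

/-! ### Auxiliary arithmetic lemmas -/

private lemma ee (n : ℕ) (x y : ℕ) :
    ((2*x : ℕ) : ZMod (2*n)) = ((2*y : ℕ) : ZMod (2*n)) ↔ ((x:ℕ) : ZMod n) = (y : ZMod n) := by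
  rw [ZMod.natCast_eq_natCast_iff, ZMod.natCast_eq_natCast_iff, Nat.modEq_iff_dvd,
    Nat.modEq_iff_dvd]
  push_cast
  rw [show (2*(y:ℤ) - 2*x) = 2*(y - x) by ring]
  exact mul_dvd_mul_iff_left two_ne_zero

private lemma oo (n : ℕ) (x y : ℕ) :
    ((2*x+1 : ℕ) : ZMod (2*n)) = ((2*y+1 : ℕ) : ZMod (2*n)) ↔ ((x:ℕ) : ZMod n) = (y : ZMod n) := by
  rw [ZMod.natCast_eq_natCast_iff, ZMod.natCast_eq_natCast_iff, Nat.modEq_iff_dvd,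
    Nat.modEq_iff_dvd]
  push_cast
  rw [show (2*(y:ℤ)+1 - (2*x+1)) = 2*(y - x) by ring]
  exact mul_dvd_mul_iff_left two_ne_zero

private lemma eo (n : ℕ) (x y : ℕ) :
    ((2*x : ℕ) : ZMod (2*n)) ≠ ((2*y+1 : ℕ) : ZMod (2*n)) := by
  rw [Ne, ZMod.natCast_eq_natCast_iff, Nat.modEq_iff_dvd]
  intro h
  push_cast at h
  have h2 : (2:ℤ) ∣ (2*(y:ℤ)+1 - 2*x) := dvd_trans ⟨n, by push_cast; ring⟩ h
  omega

section Aux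
variable (n : ℕ)

private lemma two_ne (hn : 3 ≤ n) (a : ZMod n) : a ≠ a + 1 + 1 := by
  intro h
  have h0 : ((2:ℕ) : ZMod n) = 0 := by
    have := (left_eq_add (a := a) (b := 1 + 1)).mp (by rw [add_assoc] at h; exact h)
    push_cast
    linear_combination this
  have := Nat.le_of_dvd (by norm_num) ((ZMod.natCast_eq_zero_iff 2 n).mp h0)
  omega

private lemma one_ne (hn : 3 ≤ n) (a : ZMod n) : a ≠ a + 1 := by
  intro h
  have h0 : ((1:ℕ) : ZMod n) = 0 := by
    have := (left_eq_add (a := a) (b := 1)).mp h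
    push_cast
    linear_combination this
  have := Nat.le_of_dvd (by norm_num) ((ZMod.natCast_eq_zero_iff 1 n).mp h0)
  omega

/-- The "starting vertex" of an edge of the cycle graph. -/
private def startF (hn : 3 ≤ n) : Sym2 (ZMod n) → ZMod n :=
  Sym2.lift ⟨fun a b => if b = a + 1 then a else if a = b + 1 then b else a + b, by
    intro a b
    by_cases h1 : b = a + 1 <;> by_cases h2 : a = b + 1
    · exact absurd (h2.trans (by rw [h1])) (two_ne n hn a)
    · simp only [if_pos h1, if_neg h2]
    · simp only [if_neg h1, if_pos h2]
    · simp only [if_neg h1, if_neg h2, add_comm]⟩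

private lemma startF_pair (hn : 3 ≤ n) (a : ZMod n) : startF n hn s(a, a+1) = a := by
  simp [startF]

private lemma pair_mem (hn : 3 ≤ n) (j : ZMod n) : s(j, j+1) ∈ (cycleGraph n).edgeSet :=
  ⟨one_ne n hn j, Or.inr (by ring)⟩

private lemma edge_eq (hn : 3 ≤ n) (e : (cycleGraph n).edgeSet) :
    (e : Sym2 (ZMod n)) = s(startF n hn e.1, startF n hn e.1 + 1) := by
  obtain ⟨e, he⟩ := e
  induction e using Sym2.inductionOn with
  | hf a b =>
    rw [SimpleGraph.mem_edgeSet] at he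
    obtain ⟨hne, h | h⟩ := he
    · have ha : a = b + 1 := by rw [sub_eq_iff_eq_add] at h; rw [h, add_comm]
      have hb : b ≠ a + 1 := fun hb => two_ne n hn b (hb.trans (by rw [ha]))
      simp only [startF, Sym2.lift_mk, if_neg hb, if_pos ha]
      rw [ha, Sym2.eq_swap]
    · have hb : b = a + 1 := by rw [sub_eq_iff_eq_add] at h; rw [h, add_comm]
      simp only [startF, Sym2.lift_mk, if_pos hb]
      rw [hb]

private lemma pair_eq_pair_iff (hn : 3 ≤ n) (i j : ZMod n) : s(i,i+1) = s(j,j+1) ↔ i = j := by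
  rw [Sym2.eq_iff]
  constructor
  · rintro (⟨h, -⟩ | ⟨h1, h2⟩)
    · exact h
    · exact absurd (h1.trans (by rw [← h2])) (two_ne n hn i)
  · rintro rfl; exact Or.inl ⟨rfl, rfl⟩

private lemma edge_adj (hn : 3 ≤ n) (i j : ZMod n) :
    (s(i,i+1) ≠ s(j,j+1) ∧ ∃ u, u ∈ (s(i,i+1) : Sym2 (ZMod n)) ∧ u ∈ (s(j,j+1) : Sym2 (ZMod n)))
      ↔ (i - j = 1 ∨ j - i = 1) := by
  constructor
  · rintro ⟨hne, u, hu1, hu2⟩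
    rw [Sym2.mem_iff] at hu1 hu2
    have hij : i ≠ j := fun h => hne (by rw [h])
    rcases hu1 with rfl | rfl
    · rcases hu2 with rfl | h
      · exact absurd rfl hij
      · exact Or.inl (by rw [h]; ring)
    · rcases hu2 with h | h
      · exact Or.inr (by rw [← h]; ring)
      · exact absurd (by exact add_right_cancel h) hij
  · have key : ∀ k l : ZMod n, k - l = 1 →
        (s(k,k+1) ≠ s(l,l+1) ∧ ∃ u, u ∈ (s(k,k+1) : Sym2 (ZMod n)) ∧
          u ∈ (s(l,l+1) : Sym2 (ZMod n))) := by
      intro k l h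
      have hk : k = l + 1 := by rw [sub_eq_iff_eq_add] at h; rw [h, add_comm]
      refine ⟨fun hc => one_ne n hn l ?_, k, Sym2.mem_mk_left _ _, hk ▸ Sym2.mem_mk_right _ _⟩
      have := (pair_eq_pair_iff n hn k l).mp hc
      rw [hk] at this
      exact this.symm
    rintro (h | h)
    · exact key i j h
    · obtain ⟨h1, u, hu1, hu2⟩ := key j i h
      exact ⟨h1.symm, u, hu2, hu1⟩

private lemma val_iff (hn : 3 ≤ n) (a b : ZMod n) :
    ((a.val : ℕ) : ZMod n) = ((b.val + 1 : ℕ) : ZMod n) ↔ a - b = 1 := by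
  haveI : NeZero n := ⟨by omega⟩
  push_cast [ZMod.natCast_zmod_val]
  constructor
  · intro h; rw [h]; ring
  · intro h; rw [sub_eq_iff_eq_add] at h; rw [h]; ring

private lemma val_eq_iff (hn : 3 ≤ n) (a b : ZMod n) :
    ((a.val : ℕ) : ZMod n) = ((b.val : ℕ) : ZMod n) ↔ a = b := by
  haveI : NeZero n := ⟨by omega⟩
  rw [ZMod.natCast_zmod_val, ZMod.natCast_zmod_val]

local notation "F" a => ((2 * ZMod.val a : ℕ) : ZMod (2*n))
local notation "Fo" a => ((2 * ZMod.val a + 1 : ℕ) : ZMod (2*n))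

private lemma L0 (hn : 3 ≤ n) (a b : ZMod n) : (F a) = (F b) ↔ a = b := by
  rw [ee, val_eq_iff n hn]

private lemma L0o (hn : 3 ≤ n) (a b : ZMod n) : (Fo a) = (Fo b) ↔ a = b := by
  rw [oo, val_eq_iff n hn]

private lemma L1 (a b : ZMod n) : ¬ ((F a) - (F b) = 1) := by
  rw [sub_eq_iff_eq_add, show ((1 : ZMod (2*n)) + ((2*b.val : ℕ) : ZMod (2*n)))
    = ((2*b.val+1 : ℕ) : ZMod (2*n)) by push_cast; ring]
  exact eo n _ _

private lemma L2 (hn : 3 ≤ n) (a b : ZMod n) : (F a) - (F b) = 2 ↔ a - b = 1 := by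
  rw [sub_eq_iff_eq_add, show ((2 : ZMod (2*n)) + ((2*b.val : ℕ) : ZMod (2*n)))
    = ((2*(b.val+1) : ℕ) : ZMod (2*n)) by push_cast; ring, ee, val_iff n hn]

private lemma L3 (a b : ZMod n) : ¬ ((Fo a) - (Fo b) = 1) := by
  rw [sub_eq_iff_eq_add, show ((1 : ZMod (2*n)) + ((2*b.val+1 : ℕ) : ZMod (2*n)))
    = ((2*(b.val+1) : ℕ) : ZMod (2*n)) by push_cast; ring]
  exact fun h => eo n _ _ h.symm

private lemma L4 (hn : 3 ≤ n) (a b : ZMod n) : (Fo a) - (Fo b) = 2 ↔ a - b = 1 := by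
  rw [sub_eq_iff_eq_add, show ((2 : ZMod (2*n)) + ((2*b.val+1 : ℕ) : ZMod (2*n)))
    = ((2*(b.val+1)+1 : ℕ) : ZMod (2*n)) by push_cast; ring, oo, val_iff n hn]

private lemma L5 (hn : 3 ≤ n) (u i : ZMod n) : (F u) - (Fo i) = 1 ↔ u - i = 1 := by
  rw [sub_eq_iff_eq_add, show ((1 : ZMod (2*n)) + ((2*i.val+1 : ℕ) : ZMod (2*n)))
    = ((2*(i.val+1) : ℕ) : ZMod (2*n)) by push_cast; ring, ee, val_iff n hn]

private lemma L6 (hn : 3 ≤ n) (u i : ZMod n) : (Fo i) - (F u) = 1 ↔ u = i := by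
  rw [sub_eq_iff_eq_add, show ((1 : ZMod (2*n)) + ((2*u.val : ℕ) : ZMod (2*n)))
    = ((2*u.val+1 : ℕ) : ZMod (2*n)) by push_cast; ring, oo, val_eq_iff n hn]
  exact eq_comm

private lemma L7 (u i : ZMod n) : ¬ ((F u) - (Fo i) = 2) := by
  rw [sub_eq_iff_eq_add, show ((2 : ZMod (2*n)) + ((2*i.val+1 : ℕ) : ZMod (2*n)))
    = ((2*(i.val+1)+1 : ℕ) : ZMod (2*n)) by push_cast; ring]
  exact eo n _ _

private lemma L8 (u i : ZMod n) : ¬ ((Fo i) - (F u) = 2) := by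
  rw [sub_eq_iff_eq_add, show ((2 : ZMod (2*n)) + ((2*u.val : ℕ) : ZMod (2*n)))
    = ((2*(u.val+1) : ℕ) : ZMod (2*n)) by push_cast; ring]
  exact fun h => eo n _ _ h.symm

private lemma L9 (u i : ZMod n) : ¬ ((F u) = (Fo i)) := eo n _ _

private lemma L9' (u i : ZMod n) : ¬ ((Fo i) = (F u)) := fun h => eo n _ _ h.symm

private lemma sub1 (a b : ZMod n) : a - b = 1 ↔ a = b + 1 := by
  rw [sub_eq_iff_eq_add, add_comm]

/-! ### The bijection -/

private def isoFun (hn : 3 ≤ n) : ZMod n ⊕ (cycleGraph n).edgeSet → ZMod (2*n)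
  | Sum.inl i => ((2 * i.val : ℕ) : ZMod (2*n))
  | Sum.inr e => ((2 * (startF n hn e.1).val + 1 : ℕ) : ZMod (2*n))

private def isoInv (hn : 3 ≤ n) (x : ZMod (2*n)) : ZMod n ⊕ (cycleGraph n).edgeSet :=
  if x.val % 2 = 0 then Sum.inl ((x.val / 2 : ℕ) : ZMod n)
  else Sum.inr ⟨s(((x.val / 2 : ℕ) : ZMod n), ((x.val / 2 : ℕ) : ZMod n) + 1), pair_mem n hn _⟩

private lemma iso_left (hn : 3 ≤ n) : Function.LeftInverse (isoInv n hn) (isoFun n hn) := by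
  haveI : NeZero n := ⟨by omega⟩
  haveI : NeZero (2*n) := ⟨by omega⟩
  rintro (i | e)
  · have hval : ((2 * i.val : ℕ) : ZMod (2*n)).val = 2 * i.val := by
      rw [ZMod.val_natCast, Nat.mod_eq_of_lt (by have := ZMod.val_lt i; omega)]
    simp only [isoFun, isoInv, hval]
    rw [if_pos (by omega)]
    congr 1
    rw [Nat.mul_div_cancel_left _ (by norm_num)]
    exact ZMod.natCast_zmod_val i
  · have hval : ((2 * (startF n hn e.1).val + 1 : ℕ) : ZMod (2*n)).val
        = 2 * (startF n hn e.1).val + 1 := by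
      rw [ZMod.val_natCast,
        Nat.mod_eq_of_lt (by have := ZMod.val_lt (startF n hn e.1); omega)]
    simp only [isoFun, isoInv, hval]
    rw [if_neg (by omega)]
    congr 1
    apply Subtype.ext
    have h2 : (2 * (startF n hn e.1).val + 1) / 2 = (startF n hn e.1).val := by omega
    simp only [h2, ZMod.natCast_zmod_val]
    exact (edge_eq n hn e).symm

private lemma iso_right (hn : 3 ≤ n) : Function.RightInverse (isoInv n hn) (isoFun n hn) := by
  haveI : NeZero n := ⟨by omega⟩
  haveI : NeZero (2*n) := ⟨by omega⟩
  intro x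
  have hx : x.val < 2*n := ZMod.val_lt x
  have hv : ((x.val / 2 : ℕ) : ZMod n).val = x.val / 2 := by
    rw [ZMod.val_natCast, Nat.mod_eq_of_lt (by omega)]
  by_cases h : x.val % 2 = 0
  · simp only [isoInv, if_pos h, isoFun, hv]
    rw [show 2 * (x.val / 2) = x.val by omega, ZMod.natCast_zmod_val]
  · simp only [isoInv, if_neg h, isoFun, startF_pair n hn, hv]
    rw [show 2 * (x.val / 2) + 1 = x.val by omega, ZMod.natCast_zmod_val]

end Aux

/-- For `n ≥ 3`, the total graph of the cycle `C n` is isomorphic to the square of the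
cycle on `2n` vertices. -/
theorem stmt_8 (n : ℕ) (hn : 3 ≤ n) :
    Nonempty (totalGraph (cycleGraph n) ≃g cycleSquare (2 * n)) := by
  refine ⟨⟨⟨isoFun n hn, isoInv n hn, iso_left n hn, iso_right n hn⟩, ?_⟩⟩
  rintro (u | e) (w | f)
  · show (cycleSquare (2*n)).Adj ((2 * u.val : ℕ) : ZMod (2*n)) ((2 * w.val : ℕ) : ZMod (2*n))
      ↔ (cycleGraph n).Adj u w
    show (_ ≠ _ ∧ _) ↔ (_ ≠ _ ∧ _)
    simp only [ne_eq, L0 n hn, L1 n, L2 n hn]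
    tauto
  · show (cycleSquare (2*n)).Adj ((2 * u.val : ℕ) : ZMod (2*n))
        ((2 * (startF n hn f.1).val + 1 : ℕ) : ZMod (2*n)) ↔ u ∈ (f : Sym2 (ZMod n))
    have hmem : u ∈ (f : Sym2 (ZMod n)) ↔ u = startF n hn f.1 ∨ u = startF n hn f.1 + 1 := by
      conv_lhs => rw [edge_eq n hn f]
      exact Sym2.mem_iff
    rw [hmem]
    show (_ ≠ _ ∧ _) ↔ _
    simp only [ne_eq, L9 n, L5 n hn, L6 n hn, L7 n, L8 n, sub1 n]
    tauto
  · show (cycleSquare (2*n)).Adj ((2 * (startF n hn e.1).val + 1 : ℕ) : ZMod (2*n))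
        ((2 * w.val : ℕ) : ZMod (2*n)) ↔ w ∈ (e : Sym2 (ZMod n))
    have hmem : w ∈ (e : Sym2 (ZMod n)) ↔ w = startF n hn e.1 ∨ w = startF n hn e.1 + 1 := by
      conv_lhs => rw [edge_eq n hn e]
      exact Sym2.mem_iff
    rw [hmem]
    show (_ ≠ _ ∧ _) ↔ _
    simp only [ne_eq, L9' n, L5 n hn, L6 n hn, L7 n, L8 n, sub1 n]
    tauto
  · show (cycleSquare (2*n)).Adj ((2 * (startF n hn e.1).val + 1 : ℕ) : ZMod (2*n))
        ((2 * (startF n hn f.1).val + 1 : ℕ) : ZMod (2*n))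
      ↔ (e ≠ f ∧ ∃ u, u ∈ (e : Sym2 (ZMod n)) ∧ u ∈ (f : Sym2 (ZMod n)))
    have hR : (e ≠ f ∧ ∃ u, u ∈ (e : Sym2 (ZMod n)) ∧ u ∈ (f : Sym2 (ZMod n)))
        ↔ (startF n hn e.1 - startF n hn f.1 = 1 ∨ startF n hn f.1 - startF n hn e.1 = 1) := by
      rw [← edge_adj n hn (startF n hn e.1) (startF n hn f.1)]
      constructor
      · rintro ⟨h1, h2⟩
        refine ⟨?_, by rw [← edge_eq n hn e, ← edge_eq n hn f]; exact h2⟩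
        rw [← edge_eq n hn e, ← edge_eq n hn f]
        exact fun hc => h1 (Subtype.ext hc)
      · rintro ⟨h1, h2⟩
        refine ⟨?_, by rw [← edge_eq n hn e, ← edge_eq n hn f] at h2; exact h2⟩
        rw [← edge_eq n hn e, ← edge_eq n hn f] at h1
        exact fun hc => h1 (by rw [hc])
    rw [hR]
    have kne : ∀ a b : ZMod n, a - b = 1 → a ≠ b := fun a b h hc =>
      one_ne n hn 0 (by rw [zero_add, ← h, hc, sub_self])
    have k1 := kne (startF n hn e.1) (startF n hn f.1)
    have k2 := kne (startF n hn f.1) (startF n hn e.1)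
    show (_ ≠ _ ∧ _) ↔ _
    simp only [ne_eq, L0o n hn, L3 n, L4 n hn]
    tauto
end

section
/- For every natural number n ≥ 2, the total graph of the path graph P_n on n vertices is isomorphic to the square of the path on 2n − 1 vertices, i.e. to the simple graph on {0, 1, …, 2n − 2} in which distinct i and j are adjacent exactly when |i − j| ∈ {1, 2}. -/
/-- The path graph `P n` on `Fin n`: distinct `i, j` adjacent iff `|i - j| = 1`. -/
def pathGraph' (n : ℕ) : SimpleGraph (Fin n) where
  Adj i j := (i : ℕ) + 1 = j ∨ (j : ℕ) + 1 = i
  symm := ⟨fun i j h => h.symm⟩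
  loopless := ⟨fun i h => by omega⟩

/-- The square of the path on `Fin n`: distinct `i, j` adjacent iff `|i - j| ∈ {1, 2}`. -/
def pathSquare (n : ℕ) : SimpleGraph (Fin n) where
  Adj i j := (i : ℕ) + 1 = j ∨ (j : ℕ) + 1 = i ∨ (i : ℕ) + 2 = j ∨ (j : ℕ) + 2 = i
  symm := ⟨fun i j h => by tauto⟩
  loopless := ⟨fun i h => by omega⟩

lemma edge_rep {n : ℕ} (e : (pathGraph' n).edgeSet) :
    ∃ (i : ℕ) (h : i + 1 < n),
      (e : Sym2 (Fin n)) = s(⟨i, by omega⟩, ⟨i + 1, h⟩) := by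
  obtain ⟨s, hs⟩ := e
  induction s using Sym2.ind with
  | _ a b =>
    simp only [SimpleGraph.mem_edgeSet, pathGraph'] at hs
    rcases hs with h | h
    · refine ⟨a.val, by omega, ?_⟩
      show s(a, b) = _
      rw [Sym2.eq_iff]; left
      constructor <;> apply Fin.ext <;> simp <;> omega
    · refine ⟨b.val, by omega, ?_⟩
      show s(a, b) = _
      rw [Sym2.eq_iff]; right
      constructor <;> apply Fin.ext <;> simp <;> omega

/-- For `n ≥ 2`, the total graph of the path `P n` is isomorphic to the square of the
path on `2n - 1` vertices. -/
theorem stmt_9 (n : ℕ) (hn : 2 ≤ n) :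
    Nonempty (totalGraph (pathGraph' n) ≃g pathSquare (2 * n - 1)) := by
  classical
  -- the natural-number value of each vertex of the total graph
  let tn : Fin n ⊕ (pathGraph' n).edgeSet → ℕ :=
    Sum.elim (fun i => 2 * i.val)
      (fun e => Sym2.lift ⟨fun a b => a.val + b.val, fun a b => by ring⟩ (e : Sym2 (Fin n)))
  have hval : ∀ e : (pathGraph' n).edgeSet, ∃ (i : ℕ) (h : i + 1 < n),
      (e : Sym2 (Fin n)) = s(⟨i, by omega⟩, ⟨i + 1, h⟩) ∧ tn (Sum.inr e) = 2 * i + 1 := by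
    intro e
    obtain ⟨i, h, hrep⟩ := edge_rep e
    refine ⟨i, h, hrep, ?_⟩
    show Sym2.lift _ (e : Sym2 (Fin n)) = 2 * i + 1
    rw [hrep, Sym2.lift_mk]
    simp; ring
  have hbd : ∀ x, tn x < 2 * n - 1 := by
    rintro (u | e)
    · have := u.isLt; simp only [tn, Sum.elim_inl]; omega
    · obtain ⟨i, h, -, hv⟩ := hval e
      rw [hv]; omega
  let f : Fin n ⊕ (pathGraph' n).edgeSet → Fin (2 * n - 1) := fun x => ⟨tn x, hbd x⟩
  have hinj : Function.Injective f := by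
    rintro (u | e) (w | e') h
    · have : tn (Sum.inl u) = tn (Sum.inl w) := congrArg Fin.val h
      simp only [tn, Sum.elim_inl] at this
      exact congrArg Sum.inl (Fin.ext (by omega))
    · obtain ⟨i, hi, -, hv⟩ := hval e'
      have : tn (Sum.inl u) = tn (Sum.inr e') := congrArg Fin.val h
      rw [hv] at this; simp only [tn, Sum.elim_inl] at this; omega
    · obtain ⟨i, hi, -, hv⟩ := hval e
      have : tn (Sum.inr e) = tn (Sum.inl w) := congrArg Fin.val h
      rw [hv] at this; simp only [tn, Sum.elim_inr, Sum.elim_inl] at this; omega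
    · obtain ⟨i, hi, hrep, hv⟩ := hval e
      obtain ⟨j, hj, hrep', hv'⟩ := hval e'
      have hval2 : tn (Sum.inr e) = tn (Sum.inr e') := congrArg Fin.val h
      rw [hv, hv'] at hval2
      have hij : i = j := by omega
      subst hij
      refine congrArg Sum.inr (Subtype.ext ?_)
      rw [hrep, hrep']
  have hsurj : Function.Surjective f := by
    intro k
    have hk := k.isLt
    rcases Nat.even_or_odd k.val with ⟨m, hm⟩ | ⟨m, hm⟩
    · refine ⟨Sum.inl ⟨m, by omega⟩, Fin.ext ?_⟩
      show 2 * m = k.val; omega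
    · have hmn : m + 1 < n := by omega
      have hadj : (pathGraph' n).Adj ⟨m, by omega⟩ ⟨m + 1, hmn⟩ := Or.inl rfl
      refine ⟨Sum.inr ⟨s(⟨m, by omega⟩, ⟨m + 1, hmn⟩), hadj⟩, Fin.ext ?_⟩
      show Sym2.lift _ s((⟨m, _⟩ : Fin n), ⟨m + 1, hmn⟩) = k.val
      rw [Sym2.lift_mk]; simp; omega
  have hrel : ∀ x y, (pathSquare (2 * n - 1)).Adj (f x) (f y) ↔
      (totalGraph (pathGraph' n)).Adj x y := by
    have hadjS : ∀ x y, (pathSquare (2 * n - 1)).Adj (f x) (f y) ↔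
        (tn x + 1 = tn y ∨ tn y + 1 = tn x ∨ tn x + 2 = tn y ∨ tn y + 2 = tn x) :=
      fun x y => Iff.rfl
    rintro (u | e) (w | e')
    · rw [hadjS]
      show _ ↔ (pathGraph' n).Adj u w
      simp only [tn, Sum.elim_inl, pathGraph']
      constructor <;> intro h <;> [skip; skip] <;> omega
    · obtain ⟨i, hi, hrep, hv⟩ := hval e'
      rw [hadjS]
      show _ ↔ u ∈ (e' : Sym2 (Fin n))
      rw [hrep, Sym2.mem_iff, hv]
      simp only [tn, Sum.elim_inl, Fin.ext_iff]
      constructor <;> intro h <;> simp at * <;> omega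
    · obtain ⟨i, hi, hrep, hv⟩ := hval e
      rw [hadjS]
      show _ ↔ w ∈ (e : Sym2 (Fin n))
      rw [hrep, Sym2.mem_iff, hv]
      simp only [tn, Sum.elim_inl, Fin.ext_iff]
      constructor <;> intro h <;> simp at * <;> omega
    · obtain ⟨i, hi, hrep, hv⟩ := hval e
      obtain ⟨j, hj, hrep', hv'⟩ := hval e'
      rw [hadjS, hv, hv']
      show _ ↔ (e ≠ e' ∧ ∃ u, u ∈ (e : Sym2 (Fin n)) ∧ u ∈ (e' : Sym2 (Fin n)))
      rw [hrep, hrep']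
      constructor
      · intro h
        have hij : i + 1 = j ∨ j + 1 = i := by omega
        constructor
        · intro hee
          have : (e : Sym2 (Fin n)) = (e' : Sym2 (Fin n)) := congrArg _ hee
          rw [hrep, hrep', Sym2.eq_iff] at this
          rcases this with ⟨h1, -⟩ | ⟨h1, h2⟩ <;>
            simp only [Fin.mk.injEq] at * <;> omega
        · rcases hij with hij | hij
          · refine ⟨⟨j, by omega⟩, ?_, ?_⟩
            · rw [Sym2.mem_iff]; right; apply Fin.ext; simp; omega
            · rw [Sym2.mem_iff]; left; rfl
          · refine ⟨⟨i, by omega⟩, ?_, ?_⟩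
            · rw [Sym2.mem_iff]; left; rfl
            · rw [Sym2.mem_iff]; right; apply Fin.ext; simp; omega
      · rintro ⟨hne, u, hu, hu'⟩
        have hij : i ≠ j := by
          intro hij; subst hij
          exact hne (Subtype.ext (by rw [hrep, hrep']))
        rw [Sym2.mem_iff] at hu hu'
        have hu2 : u.val = i ∨ u.val = i + 1 := by
          rcases hu with h | h <;> rw [h] <;> simp [Fin.ext_iff] <;> omega
        have hu3 : u.val = j ∨ u.val = j + 1 := by
          rcases hu' with h | h <;> rw [h] <;> simp [Fin.ext_iff] <;> omega
        omega
  exact ⟨⟨Equiv.ofBijective f ⟨hinj, hsurj⟩, fun {x y} => hrel x y⟩⟩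
end
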